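/- Let L be a sublattice of the Boolean lattice on [n] (closed under union and intersection) with ∅ ∈ L and [n] ∈ L. Then there exists an unmixed bipartite graph G on {x_1,...,x_n} ∪ {y_1,...,y_n} such that the minimal vertex covers of G are exactly the sets {x_i : i ∈ S} ∪ {y_j : j ∉ S} for S ∈ L. -/

import Mathlib

open Finset

/-- `C` is a vertex cover of the graph `G`. -/
def IsVC {α : Type*} (G : SimpleGraph α) (C : Finset α) : Prop :=
  ∀ ⦃u v : α⦄, G.Adj u v → u ∈ C ∨ v ∈ C

/-- `C` is a minimal vertex cover of the graph `G`. -/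
def IsMinVC {α : Type*} (G : SimpleGraph α) (C : Finset α) : Prop :=
  IsVC G C ∧ ∀ C' ⊂ C, ¬ IsVC G C'

/-- `G` is unmixed: all minimal vertex covers have the same cardinality. -/
def Unmixed {α : Type*} (G : SimpleGraph α) : Prop :=
  ∀ C C' : Finset α, IsMinVC G C → IsMinVC G C' → C.card = C'.card

/-- `G` is bipartite with respect to the given sum decomposition of its vertex set:
all edges go between the two parts. -/
def Bip {m n : ℕ} (G : SimpleGraph (Fin m ⊕ Fin n)) : Prop :=
  (∀ i j, ¬ G.Adj (Sum.inl i) (Sum.inl j)) ∧ ∀ i j, ¬ G.Adj (Sum.inr i) (Sum.inr j)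

/-- the set `{x_i : i ∈ S} ∪ {y_j : j ∉ S}`, where `x_i = Sum.inl i`, `y_j = Sum.inr j`. -/
def coverOf {n : ℕ} (S : Finset (Fin n)) : Finset (Fin n ⊕ Fin n) :=
  S.image Sum.inl ∪ Sᶜ.image Sum.inr

/-- the "x-part" `C̄ = {i : x_i ∈ C}` of a set of vertices `C`. -/
def xpart {n : ℕ} (C : Finset (Fin n ⊕ Fin n)) : Finset (Fin n) :=
  Finset.univ.filter fun i => Sum.inl i ∈ C

lemma mem_coverOf_inl {n : ℕ} (S : Finset (Fin n)) (i : Fin n) :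
    Sum.inl i ∈ coverOf S ↔ i ∈ S := by
  simp [coverOf]

lemma mem_coverOf_inr {n : ℕ} (S : Finset (Fin n)) (j : Fin n) :
    Sum.inr j ∈ coverOf S ↔ j ∉ S := by
  simp [coverOf]

lemma card_coverOf {n : ℕ} (S : Finset (Fin n)) : (coverOf S).card = n := by
  have hd : Disjoint (S.image Sum.inl) (Sᶜ.image (Sum.inr : Fin n → Fin n ⊕ Fin n)) := by
    simp [Finset.disjoint_left]
  have hle := Finset.card_le_univ S
  rw [coverOf, Finset.card_union_of_disjoint hd,
    Finset.card_image_of_injective _ Sum.inl_injective,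
    Finset.card_image_of_injective _ Sum.inr_injective, Finset.card_compl]
  simp only [Fintype.card_fin] at *
  omega

/-- every sublattice of the Boolean lattice containing `∅` and `[n]`
arises as the lattice of minimal vertex covers of an unmixed bipartite graph. -/
theorem stmt_6 {n : ℕ} (L : Set (Finset (Fin n)))
    (hbot : (∅ : Finset (Fin n)) ∈ L) (htop : (Finset.univ : Finset (Fin n)) ∈ L)
    (hlat : ∀ S ∈ L, ∀ T ∈ L, S ∪ T ∈ L ∧ S ∩ T ∈ L) :
    ∃ G : SimpleGraph (Fin n ⊕ Fin n), Bip G ∧ Unmixed G ∧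
      ∀ C : Finset (Fin n ⊕ Fin n), IsMinVC G C ↔ ∃ S ∈ L, C = coverOf S := by
  classical
  -- the relation defining the edges
  set rel : Fin n → Fin n → Prop := fun i j => ∀ S ∈ L, j ∈ S → i ∈ S with hrel
  have hrefl : ∀ j, rel j j := fun j S _ h => h
  -- closure of L under finite infs and sups
  have hinf : ∀ F : Finset (Finset (Fin n)), (∀ S ∈ F, S ∈ L) → F.inf id ∈ L := by
    intro F
    induction F using Finset.induction with
    | empty => intro _; simpa using htop
    | insert _ _ hx ih =>
      intro h
      rw [Finset.inf_insert]
      have h1 := h _ (Finset.mem_insert_self _ _)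
      have h2 := ih fun S hS => h _ (Finset.mem_insert_of_mem hS)
      simpa [Finset.inf_eq_inter] using (hlat _ h1 _ h2).2
  have hsup : ∀ F : Finset (Fin n), ∀ f : Fin n → Finset (Fin n),
      (∀ j ∈ F, f j ∈ L) → F.sup f ∈ L := by
    intro F f
    induction F using Finset.induction with
    | empty => intro _; simpa using hbot
    | insert _ _ hx ih =>
      intro h
      rw [Finset.sup_insert]
      have h1 := h _ (Finset.mem_insert_self _ _)
      have h2 := ih fun S hS => h _ (Finset.mem_insert_of_mem hS)
      simpa [Finset.sup_eq_union] using (hlat _ h1 _ h2).1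
  -- the smallest lattice element containing j
  have hT : ∀ j : Fin n, ∃ T ∈ L, ∀ i, i ∈ T ↔ rel i j := by
    intro j
    have hfin : {S : Finset (Fin n) | S ∈ L ∧ j ∈ S}.Finite := Set.toFinite _
    refine ⟨hfin.toFinset.inf id, hinf _ ?_, ?_⟩
    · intro S hS
      exact (hfin.mem_toFinset.mp hS).1
    · intro i
      rw [Finset.mem_inf]
      constructor
      · intro h S hS hjS
        exact h S (hfin.mem_toFinset.mpr ⟨hS, hjS⟩)
      · intro h S hS
        obtain ⟨h1, h2⟩ := hfin.mem_toFinset.mp hS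
        exact h S h1 h2
  choose T hTL hTiff using hT
  -- the graph
  set G : SimpleGraph (Fin n ⊕ Fin n) := {
    Adj := fun u v =>
      (∃ i j, rel i j ∧ u = Sum.inl i ∧ v = Sum.inr j) ∨
      (∃ i j, rel i j ∧ u = Sum.inr j ∧ v = Sum.inl i),
    symm := by
      constructor; rintro u v (⟨i, j, h, rfl, rfl⟩ | ⟨i, j, h, rfl, rfl⟩)
      · exact Or.inr ⟨i, j, h, rfl, rfl⟩
      · exact Or.inl ⟨i, j, h, rfl, rfl⟩
    loopless := by
      constructor; rintro u (⟨i, j, h, rfl, h2⟩ | ⟨i, j, h, rfl, h2⟩) <;> simp at h2 } with hG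
  have hadj : ∀ i j, G.Adj (Sum.inl i) (Sum.inr j) ↔ rel i j := by
    intro i j
    constructor
    · rintro (⟨a, b, h, h1, h2⟩ | ⟨a, b, h, h1, h2⟩)
      · obtain rfl : i = a := Sum.inl.inj h1
        obtain rfl : j = b := Sum.inr.inj h2
        exact h
      · simp at h1
    · intro h; exact Or.inl ⟨i, j, h, rfl, rfl⟩
  -- coverOf S is a vertex cover when S ∈ L
  have hvc : ∀ S ∈ L, IsVC G (coverOf S) := by
    intro S hS u v hadj'
    rcases hadj' with ⟨i, j, h, rfl, rfl⟩ | ⟨i, j, h, rfl, rfl⟩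
    · by_cases hj : j ∈ S
      · exact Or.inl ((mem_coverOf_inl S i).mpr (h S hS hj))
      · exact Or.inr ((mem_coverOf_inr S j).mpr hj)
    · by_cases hj : j ∈ S
      · exact Or.inr ((mem_coverOf_inl S i).mpr (h S hS hj))
      · exact Or.inl ((mem_coverOf_inr S j).mpr hj)
  -- the characterization of minimal vertex covers
  have hiff : ∀ C : Finset (Fin n ⊕ Fin n), IsMinVC G C ↔ ∃ S ∈ L, C = coverOf S := by
    intro C
    constructor
    · rintro ⟨hC, hmin⟩
      set S : Finset (Fin n) := (Finset.univ.filter fun j => Sum.inr j ∉ C).sup T with hSdef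
      have hSL : S ∈ L := hsup _ _ fun j _ => hTL j
      have hsub : coverOf S ⊆ C := by
        intro v hv
        rcases v with i | j
        · rw [mem_coverOf_inl] at hv
          rw [hSdef, Finset.mem_sup] at hv
          obtain ⟨j, hj, hij⟩ := hv
          rw [Finset.mem_filter] at hj
          have hrij : rel i j := (hTiff j i).mp hij
          rcases hC ((hadj i j).mpr hrij) with h | h
          · exact h
          · exact absurd h hj.2
        · rw [mem_coverOf_inr] at hv
          by_contra hjC
          apply hv
          rw [hSdef, Finset.mem_sup]
          exact ⟨j, Finset.mem_filter.mpr ⟨Finset.mem_univ _, hjC⟩,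
            (hTiff j j).mpr (hrefl j)⟩
      refine ⟨S, hSL, ?_⟩
      by_cases heq : coverOf S = C
      · exact heq.symm
      · exact absurd (hvc S hSL)
          (hmin _ (Finset.ssubset_iff_subset_ne.mpr ⟨hsub, heq⟩))
    · rintro ⟨S, hS, rfl⟩
      refine ⟨hvc S hS, ?_⟩
      intro C' hC' hvc'
      obtain ⟨v, hv, hv'⟩ := Finset.exists_of_ssubset hC'
      rcases v with i | j
      · rw [mem_coverOf_inl] at hv
        rcases hvc' ((hadj i i).mpr (hrefl i)) with h | h
        · exact hv' h
        · have := hC'.1 h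
          rw [mem_coverOf_inr] at this
          exact this hv
      · rw [mem_coverOf_inr] at hv
        rcases hvc' ((hadj j j).mpr (hrefl j)) with h | h
        · have := hC'.1 h
          rw [mem_coverOf_inl] at this
          exact hv this
        · exact hv' h
  refine ⟨G, ?_, ?_, hiff⟩
  · constructor <;> rintro i j (⟨a, b, h, h1, h2⟩ | ⟨a, b, h, h1, h2⟩) <;> simp_all
  · intro C C' hC hC'
    obtain ⟨S, _, rfl⟩ := (hiff C).mp hC
    obtain ⟨S', _, rfl⟩ := (hiff C').mp hC'
    rw [card_coverOf, card_coverOf]
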